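/- arXiv:2105.11964 — 3 statements merged into one kernel-verified Lean document; each statement's English description precedes it below -/
import Mathlib

section
/- Let A be an n×p random matrix whose entries are independent and identically distributed standard Gaussian random variables N(0,1), and suppose n ≤ p. Then A Aᵀ is almost surely invertible and the entrywise expectation E[Aᵀ (A Aᵀ)⁻¹ A] equals (n/p) · I_p. (The matrix Aᵀ (A Aᵀ)⁻¹ A equals A⁺A, the orthogonal projection onto the row space of A, whenever A has full row rank.) -/
open MeasureTheory ProbabilityTheory Matrix

/-- The law of an `n × p` random matrix with i.i.d. standard Gaussian `N(0,1)` entries. -/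
noncomputable def gaussianMatrix (n p : ℕ) : Measure (Fin n → Fin p → ℝ) :=
  Measure.pi fun _ : Fin n => Measure.pi fun _ : Fin p => gaussianReal 0 1

section Auxiliary

noncomputable section
local notation "γ" => gaussianReal 0 1




lemma measurePreserving_neg_gaussian :
    MeasurePreserving (fun x : ℝ => -x) γ γ := by
  refine ⟨measurable_neg, ?_⟩
  have := gaussianReal_map_const_mul (μ := 0) (v := 1) (-1)
  simp only [neg_one_mul, mul_zero] at this
  rw [this]
  congr 1
  ext
  norm_num

instance noAtoms_gaussian : NullSingletonClass (gaussianReal 0 1) := by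
  constructor
  intro x
  rw [gaussianReal_of_var_ne_zero _ one_ne_zero]
  rw [withDensity_apply _ (measurableSet_singleton x)]
  simp

lemma measurable_mveval {ι : Type*} [Fintype ι] (q : MvPolynomial ι ℝ) :
    Measurable fun x : ι → ℝ => MvPolynomial.eval x q := by
  have : (fun x : ι → ℝ => MvPolynomial.eval x q)
      = fun x => ∑ d ∈ q.support, MvPolynomial.coeff d q * ∏ i ∈ d.support, x i ^ d i := by
    funext x; rw [MvPolynomial.eval_eq]
  rw [this]
  exact Finset.measurable_sum _ fun d _ => (Finset.measurable_prod _
    fun i _ => (measurable_pi_apply i).pow_const _).const_mul _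

lemma ae_eval_ne_zero_fin : ∀ (m : ℕ) (q : MvPolynomial (Fin m) ℝ), q ≠ 0 →
    ∀ᵐ x ∂(Measure.pi fun _ : Fin m => γ), MvPolynomial.eval x q ≠ 0 := by
  intro m
  induction m with
  | zero =>
    intro q hq
    obtain ⟨a, rfl⟩ := MvPolynomial.C_surjective (Fin 0) q
    have ha : a ≠ 0 := fun h => hq (by simp [h])
    filter_upwards with x
    simpa using ha
  | succ m IH =>
    intro q hq
    set q' := MvPolynomial.finSuccEquiv ℝ m q with hq'def
    have hq' : q' ≠ 0 := by
      intro h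
      apply hq
      have := congrArg (MvPolynomial.finSuccEquiv ℝ m).symm h
      simpa [hq'def] using this
    have hlead : q'.leadingCoeff ≠ 0 := Polynomial.leadingCoeff_ne_zero.mpr hq'
    set s : Set (Fin (m+1) → ℝ) := {x | MvPolynomial.eval x q = 0} with hs
    rw [ae_iff]
    have hset : {x | ¬ MvPolynomial.eval x q ≠ 0} = s := by ext x; simp [hs]
    rw [hset]
    have MP := measurePreserving_piFinSuccAbove (fun _ : Fin (m+1) => γ) 0
    set e := MeasurableEquiv.piFinSuccAbove (fun _ : Fin (m+1) => ℝ) 0 with he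
    set ν := Measure.pi fun _ : Fin m => γ with hν
    set s' : Set (ℝ × (Fin m → ℝ)) :=
      {yz | MvPolynomial.eval (Fin.cons yz.1 yz.2) q = 0} with hs'
    have hmc : Measurable fun yz : ℝ × (Fin m → ℝ) => (Fin.cons yz.1 yz.2 : Fin (m+1) → ℝ) := by
      apply measurable_pi_lambda
      intro i
      refine Fin.cases ?_ ?_ i
      · simpa using measurable_fst
      · intro j; simp only [Fin.cons_succ]; exact (measurable_pi_apply j).comp measurable_snd
    have hs'm : MeasurableSet s' :=
      ((measurable_mveval q).comp hmc) (measurableSet_singleton 0)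
    have hpre : s = e ⁻¹' s' := by
      ext x
      have hcons : (Fin.cons (x 0) (fun j => x ((0:Fin (m+1)).succAbove j)) : Fin (m+1) → ℝ)
          = x := by
        simp only [Fin.succAbove_zero]
        exact Fin.cons_self_tail x
      have heapp : (e x : ℝ × (Fin m → ℝ)) = (x 0, fun j => x ((0:Fin (m+1)).succAbove j)) := rfl
      simp only [Set.mem_preimage, hs', Set.mem_setOf_eq, hs, heapp, hcons]
    rw [hpre, ← MeasureTheory.Measure.map_apply e.measurable hs'm, MP.map_eq]
    rw [← Measure.prod_swap, MeasureTheory.Measure.map_apply measurable_swap hs'm]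
    rw [Measure.measure_prod_null (measurable_swap hs'm)]
    filter_upwards [IH q'.leadingCoeff hlead] with z hz
    have hr : (q'.map (MvPolynomial.eval z)) ≠ 0 := by
      intro h
      apply hz
      have h1 := congrArg (fun r => Polynomial.coeff r q'.natDegree) h
      rw [Polynomial.leadingCoeff, ← Polynomial.coeff_map (MvPolynomial.eval z)]
      simpa using h1
    have hsub : (Prod.mk z ⁻¹' (Prod.swap ⁻¹' s'))
        = {y : ℝ | (q'.map (MvPolynomial.eval z)).IsRoot y} := by
      ext y
      simp only [Set.mem_preimage, Prod.swap, hs', Set.mem_setOf_eq, Polynomial.IsRoot]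
      rw [MvPolynomial.eval_eq_eval_mv_eval']
    simp only [hsub]
    exact Set.Countable.measure_zero (Polynomial.finite_setOf_isRoot hr).countable _



lemma ae_eval_ne_zero {ι : Type*} [Fintype ι] (q : MvPolynomial ι ℝ) (hq : q ≠ 0) :
    ∀ᵐ x ∂(Measure.pi fun _ : ι => γ), MvPolynomial.eval x q ≠ 0 := by
  classical
  set m := Fintype.card ι
  set e : ι ≃ Fin m := Fintype.equivFin ι
  have MP := measurePreserving_piCongrLeft (fun _ : ι => γ) e.symm
  set φ := MeasurableEquiv.piCongrLeft (fun _ : ι => ℝ) e.symm with hφ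
  have hφx : ∀ (x : Fin m → ℝ) (i : ι), φ x i = x (e i) := by
    intro x i
    have h1 : φ x (e.symm (e i)) = x (e i) := by
      rw [hφ, MeasurableEquiv.coe_piCongrLeft]
      exact Equiv.piCongrLeft_apply_apply (fun _ : ι => ℝ) e.symm x (e i)
    simpa using h1
  set q2 : MvPolynomial (Fin m) ℝ := MvPolynomial.rename e q with hq2
  have hq2ne : q2 ≠ 0 := fun h =>
    hq ((MvPolynomial.rename_injective _ e.injective).eq_iff.mp (by simpa [hq2] using h))
  have key := ae_eval_ne_zero_fin m q2 hq2ne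
  rw [ae_iff] at key ⊢
  set s : Set (ι → ℝ) := {x | ¬ MvPolynomial.eval x q ≠ 0} with hs
  have hsm : MeasurableSet s := by
    have : s = (fun x : ι → ℝ => MvPolynomial.eval x q) ⁻¹' {0} := by ext x; simp [hs]
    rw [this]; exact measurable_mveval q (measurableSet_singleton 0)
  rw [← MP.map_eq, MeasureTheory.Measure.map_apply φ.measurable hsm]
  have hpre : (⇑φ) ⁻¹' s = {x : Fin m → ℝ | ¬ MvPolynomial.eval x q2 ≠ 0} := by
    ext x
    have : MvPolynomial.eval (φ x) q = MvPolynomial.eval x q2 := by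
      rw [hq2, MvPolynomial.eval_rename]
      exact congrArg (fun g : ι → ℝ => MvPolynomial.eval g q) (funext (hφx x))
    simp [hs, this]
  rw [hpre]
  exact key

/-- uncurrying map from flat index to matrix form -/
def curryMap (n p : ℕ) (x : Fin n × Fin p → ℝ) : Fin n → Fin p → ℝ := fun i j => x (i, j)

lemma measurable_curryMap (n p : ℕ) : Measurable (curryMap n p) :=
  measurable_pi_lambda _ fun i => measurable_pi_lambda _ fun j => measurable_pi_apply (i, j)


def rowSplit (n p : ℕ) : (Fin p ⊕ (Fin n × Fin p)) ≃ (Fin (n+1) × Fin p) where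
  toFun := Sum.elim (fun j => (0, j)) (fun v => (v.1.succ, v.2))
  invFun := fun w => Fin.cases (Sum.inl w.2) (fun i' => Sum.inr (i', w.2)) w.1
  left_inv := by rintro (j | ⟨i, j⟩) <;> simp
  right_inv := by
    rintro ⟨i, j⟩
    induction i using Fin.cases <;> simp

lemma measurePreserving_curryMap (n p : ℕ) :
    MeasurePreserving (curryMap n p)
      (Measure.pi fun _ : Fin n × Fin p => γ) (gaussianMatrix n p) := by
  induction n with
  | zero =>
    refine ⟨measurable_curryMap 0 p, ?_⟩
    rw [gaussianMatrix, Measure.pi_of_empty (fun _ : Fin 0 × Fin p => γ),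
      Measure.pi_of_empty _]
    rw [MeasureTheory.Measure.map_dirac' (measurable_curryMap 0 p)]
    congr 1
    funext i
    exact absurd i.2 (Fin.elim0 i)
  | succ n IH =>
    set ν := Measure.pi fun _ : Fin p => γ with hν
    have MP1 := (measurePreserving_piCongrLeft (fun _ : Fin (n+1) × Fin p => γ)
      (rowSplit n p)).symm (MeasurableEquiv.piCongrLeft (fun _ => ℝ) (rowSplit n p))
    have MP2 := measurePreserving_sumPiEquivProdPi
      (fun _ : Fin p ⊕ (Fin n × Fin p) => γ)
    have MP3 := (MeasurePreserving.id ν).prod IH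
    have MP4 := (measurePreserving_piFinSuccAbove (fun _ : Fin (n+1) => ν) 0).symm
      (MeasurableEquiv.piFinSuccAbove (fun _ : Fin (n+1) => (Fin p → ℝ)) 0)
    have comp := ((MP4.comp MP3).comp MP2).comp MP1
    convert comp using 1
    on_goal 2 => rfl
    · funext x
      funext i j
      show curryMap (n+1) p x i j = _
      induction i using Fin.cases with
  | zero => rfl
  | succ i' => rfl





variable {n p : ℕ}

def detPoly (n p : ℕ) : MvPolynomial (Fin n × Fin p) ℝ :=
  (((Matrix.of fun i j => MvPolynomial.X (i, j)) :
      Matrix (Fin n) (Fin p) (MvPolynomial (Fin n × Fin p) ℝ)) *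
    ((Matrix.of fun i j => MvPolynomial.X (i, j)) :
      Matrix (Fin n) (Fin p) (MvPolynomial (Fin n × Fin p) ℝ))ᵀ).det

lemma eval_detPoly (x : Fin n × Fin p → ℝ) :
    MvPolynomial.eval x (detPoly n p)
      = (Matrix.of (curryMap n p x) * (Matrix.of (curryMap n p x))ᵀ).det := by
  rw [detPoly, RingHom.map_det (MvPolynomial.eval x)]
  congr 1
  rw [RingHom.mapMatrix_apply, Matrix.map_mul]
  congr 1
  · ext i j; simp [curryMap]
  · rw [Matrix.transpose_map]
    congr 1
    ext i j; simp [curryMap]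

lemma detPoly_ne_zero (h : n ≤ p) : detPoly n p ≠ 0 := by
  intro hzero
  set x0 : Fin n × Fin p → ℝ := fun v => if (Fin.castLE h v.1 : Fin p) = v.2 then 1 else 0
  have h1 : MvPolynomial.eval x0 (detPoly n p) = 1 := by
    rw [eval_detPoly]
    have : (Matrix.of (curryMap n p x0) * (Matrix.of (curryMap n p x0))ᵀ)
        = (1 : Matrix (Fin n) (Fin n) ℝ) := by
      ext i k
      simp only [Matrix.mul_apply, Matrix.transpose_apply, Matrix.of_apply, curryMap,
        Matrix.one_apply, x0]
      rw [Finset.sum_congr rfl (fun j _ => ite_mul _ _ _ _)]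
      simp [Finset.sum_ite_eq (Finset.univ) (Fin.castLE h i), Fin.castLE_inj, eq_comm]
    rw [this, Matrix.det_one]
  rw [hzero] at h1
  simp at h1

lemma ae_isUnit_det (h : n ≤ p) :
    ∀ᵐ A ∂(gaussianMatrix n p), IsUnit (Matrix.of A * (Matrix.of A)ᵀ).det := by
  have hmeas : MeasurableSet {A : Fin n → Fin p → ℝ |
      IsUnit (Matrix.of A * (Matrix.of A)ᵀ).det} := by
    have hc : Continuous fun A : Fin n → Fin p → ℝ =>
        (Matrix.of A * (Matrix.of A)ᵀ).det :=
      Continuous.matrix_det (continuous_id.matrix_mul continuous_id.matrix_transpose)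
    have : {A : Fin n → Fin p → ℝ | IsUnit (Matrix.of A * (Matrix.of A)ᵀ).det}
        = (fun A : Fin n → Fin p → ℝ => (Matrix.of A * (Matrix.of A)ᵀ).det) ⁻¹' {0}ᶜ := by
      ext A; simp [isUnit_iff_ne_zero]
    rw [this]
    exact hc.measurable (measurableSet_singleton 0).compl
  rw [← (measurePreserving_curryMap n p).map_eq,
    ae_map_iff (measurePreserving_curryMap n p).measurable.aemeasurable hmeas]
  filter_upwards [ae_eval_ne_zero (detPoly n p) (detPoly_ne_zero h)] with x hx
  rw [eval_detPoly] at hx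
  exact isUnit_iff_ne_zero.mpr hx


variable {n p : ℕ}

/-- The projection matrix -/
def projMat (A : Fin n → Fin p → ℝ) : Matrix (Fin p) (Fin p) ℝ :=
  (Matrix.of A)ᵀ * (Matrix.of A * (Matrix.of A)ᵀ)⁻¹ * Matrix.of A

lemma projMat_apply (A : Fin n → Fin p → ℝ) (i j : Fin p) :
    projMat A i j = ∑ l, (∑ k, A k i * (Matrix.of A * (Matrix.of A)ᵀ)⁻¹ k l) * A l j := by
  simp [projMat, Matrix.mul_apply]

section bound

lemma proj_entry_abs_le (P : Matrix (Fin p) (Fin p) ℝ) (hsym : Pᵀ = P)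
    (hid : P * P = P) (i j : Fin p) : |P i j| ≤ 1 := by
  have hdiag : ∀ a : Fin p, P a a = ∑ k, (P a k)^2 := by
    intro a
    conv_lhs => rw [← hid]
    rw [Matrix.mul_apply]
    congr 1
    funext k
    have h2 : P k a = P a k := (congrFun (congrFun hsym k) a).symm
    rw [h2, sq]
  have hQ : ∀ a : Fin p, P a a ≤ 1 := by
    intro a
    set Q : Matrix (Fin p) (Fin p) ℝ := 1 - P with hQdef
    have hQsym : Qᵀ = Q := by rw [hQdef, Matrix.transpose_sub, Matrix.transpose_one, hsym]
    have hQid : Q * Q = Q := by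
      rw [hQdef]
      simp [Matrix.sub_mul, Matrix.mul_sub, hid]
    have : Q a a = ∑ k, (Q a k)^2 := by
      conv_lhs => rw [← hQid]
      rw [Matrix.mul_apply]
      congr 1
      funext k
      have h2 : Q k a = Q a k := (congrFun (congrFun hQsym k) a).symm
      rw [h2, sq]
    have hQnn : 0 ≤ Q a a := this ▸ Finset.sum_nonneg fun k _ => sq_nonneg _
    have : Q a a = 1 - P a a := by simp [hQdef, Matrix.one_apply]
    linarith [this ▸ hQnn]
  have hsq : (P i j)^2 ≤ 1 := by
    have h1 : (P i j)^2 ≤ ∑ k, (P i k)^2 :=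
      Finset.single_le_sum (fun k _ => sq_nonneg (P i k)) (Finset.mem_univ j)
    calc (P i j)^2 ≤ P i i := by rw [hdiag i] at *; exact h1
    _ ≤ 1 := hQ i
  rw [abs_le_one_iff_mul_self_le_one]
  nlinarith [hsq]

lemma gram_transpose (A : Fin n → Fin p → ℝ) :
    (Matrix.of A * (Matrix.of A)ᵀ)ᵀ = Matrix.of A * (Matrix.of A)ᵀ := by
  rw [Matrix.transpose_mul, Matrix.transpose_transpose]

lemma projMat_symm (A : Fin n → Fin p → ℝ) : (projMat A)ᵀ = projMat A := by
  rw [projMat, Matrix.transpose_mul, Matrix.transpose_mul, Matrix.transpose_transpose,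
    Matrix.transpose_nonsing_inv, gram_transpose, Matrix.mul_assoc]

lemma projMat_idem (A : Fin n → Fin p → ℝ)
    (hu : IsUnit (Matrix.of A * (Matrix.of A)ᵀ).det) : projMat A * projMat A = projMat A := by
  rw [projMat]
  have h1 : ((Matrix.of A)ᵀ * (Matrix.of A * (Matrix.of A)ᵀ)⁻¹ * Matrix.of A)
      * ((Matrix.of A)ᵀ * (Matrix.of A * (Matrix.of A)ᵀ)⁻¹ * Matrix.of A)
      = (Matrix.of A)ᵀ * ((Matrix.of A * (Matrix.of A)ᵀ)⁻¹ * (Matrix.of A * (Matrix.of A)ᵀ)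
        * (Matrix.of A * (Matrix.of A)ᵀ)⁻¹) * Matrix.of A := by
    simp only [Matrix.mul_assoc]
  rw [h1, Matrix.nonsing_inv_mul _ hu, Matrix.one_mul]

lemma projMat_abs_le (A : Fin n → Fin p → ℝ) (i j : Fin p) : |projMat A i j| ≤ 1 := by
  by_cases hu : IsUnit (Matrix.of A * (Matrix.of A)ᵀ).det
  · exact proj_entry_abs_le _ (projMat_symm A) (projMat_idem A hu) i j
  · rw [projMat, Matrix.nonsing_inv_apply_not_isUnit _ hu]
    simp

lemma trace_projMat (A : Fin n → Fin p → ℝ)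
    (hu : IsUnit (Matrix.of A * (Matrix.of A)ᵀ).det) :
    ∑ j, projMat A j j = (n : ℝ) := by
  have : ∑ j, projMat A j j = (projMat A).trace := by rw [Matrix.trace]; rfl
  rw [this, projMat, Matrix.mul_assoc, Matrix.trace_mul_comm, Matrix.mul_assoc,
    Matrix.nonsing_inv_mul _ hu]
  simp

end bound

variable {n p : ℕ}





lemma measurable_det {m : ℕ} {α : Type*} [MeasurableSpace α]
    (f : α → Matrix (Fin m) (Fin m) ℝ) (hf : ∀ i j, Measurable fun a => f a i j) :
    Measurable fun a => (f a).det := by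
  simp only [Matrix.det_apply]
  apply Finset.measurable_sum
  intro σ _
  have : (fun a => Equiv.Perm.sign σ • ∏ i, f a (σ i) i)
      = fun a => ((Equiv.Perm.sign σ : ℤ) : ℝ) * ∏ i, f a (σ i) i := by
    funext a
    simp [Units.smul_def, zsmul_eq_mul]
  rw [this]
  exact (Finset.measurable_prod _ fun i _ => hf (σ i) i).const_mul _

lemma measurable_projMat_entry (i j : Fin p) :
    Measurable fun A : Fin n → Fin p → ℝ => projMat A i j := by
  have hcoord : ∀ (k : Fin n) (l : Fin p), Measurable fun A : Fin n → Fin p → ℝ => A k l :=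
    fun k l => (measurable_pi_apply l).comp (measurable_pi_apply k)
  have hG : ∀ k l, Measurable fun A : Fin n → Fin p → ℝ => (Matrix.of A * (Matrix.of A)ᵀ) k l := by
    intro k l
    simp only [Matrix.mul_apply, Matrix.transpose_apply, Matrix.of_apply]
    exact Finset.measurable_sum _ fun m _ => (hcoord k m).mul (hcoord l m)
  have hdet : Measurable fun A : Fin n → Fin p → ℝ => (Matrix.of A * (Matrix.of A)ᵀ).det :=
    measurable_det _ hG
  have hadj : ∀ k l, Measurable fun A : Fin n → Fin p → ℝ =>
      (Matrix.of A * (Matrix.of A)ᵀ).adjugate k l := by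
    intro k l
    simp only [Matrix.adjugate_apply]
    apply measurable_det
    intro a b
    simp only [Matrix.updateRow_apply]
    by_cases hab : a = l
    · simp [hab]
    · simp only [hab, if_false]
      exact hG a b
  have hinv : ∀ k l, Measurable fun A : Fin n → Fin p → ℝ =>
      (Matrix.of A * (Matrix.of A)ᵀ)⁻¹ k l := by
    intro k l
    have : (fun A : Fin n → Fin p → ℝ => (Matrix.of A * (Matrix.of A)ᵀ)⁻¹ k l)
        = fun A => ((Matrix.of A * (Matrix.of A)ᵀ).det)⁻¹
            * (Matrix.of A * (Matrix.of A)ᵀ).adjugate k l := by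
      funext A
      rw [Matrix.inv_def, Matrix.smul_apply, Ring.inverse_eq_inv', smul_eq_mul]
    rw [this]
    exact hdet.inv.mul (hadj k l)
  have : (fun A : Fin n → Fin p → ℝ => projMat A i j)
      = fun A => ∑ l, (∑ k, A k i * (Matrix.of A * (Matrix.of A)ᵀ)⁻¹ k l) * A l j := by
    funext A; exact projMat_apply A i j
  rw [this]
  exact Finset.measurable_sum _ fun l _ =>
    ((Finset.measurable_sum _ fun k _ => (hcoord k i).mul (hinv k l)).mul (hcoord l j))




variable {n p : ℕ}

instance : IsProbabilityMeasure (gaussianMatrix n p) := by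
  unfold gaussianMatrix; infer_instance

/-- sign flip of column j0 -/
def signFlip (j0 : Fin p) (A : Fin n → Fin p → ℝ) : Fin n → Fin p → ℝ :=
  fun i j => if j = j0 then -A i j else A i j

lemma measurePreserving_signFlip (j0 : Fin p) :
    MeasurePreserving (signFlip j0 (n := n)) (gaussianMatrix n p) (gaussianMatrix n p) := by
  have hrow : MeasurePreserving (fun (y : Fin p → ℝ) j => if j = j0 then -y j else y j)
      (Measure.pi fun _ : Fin p => γ) (Measure.pi fun _ : Fin p => γ) := by
    exact measurePreserving_pi (f := fun (j : Fin p) (x : ℝ) => if j = j0 then -x else x)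
      _ _ (fun j => by
      by_cases hj : j = j0
      · simp only [if_pos hj]
        exact measurePreserving_neg_gaussian
      · simp only [if_neg hj]
        exact MeasurePreserving.id γ)
  exact measurePreserving_pi _ _ (fun _ => hrow)

/-- column permutation -/
def colPerm (σ : Equiv.Perm (Fin p)) (A : Fin n → Fin p → ℝ) : Fin n → Fin p → ℝ :=
  fun i j => A i (σ j)

lemma measurePreserving_colPerm (σ : Equiv.Perm (Fin p)) :
    MeasurePreserving (colPerm σ (n := n)) (gaussianMatrix n p) (gaussianMatrix n p) := by
  have hrow : MeasurePreserving (fun (y : Fin p → ℝ) j => y (σ j))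
      (Measure.pi fun _ : Fin p => γ) (Measure.pi fun _ : Fin p => γ) := by
    have MP := measurePreserving_piCongrLeft (fun _ : Fin p => γ) σ.symm
    have hco : ⇑(MeasurableEquiv.piCongrLeft (fun _ : Fin p => ℝ) σ.symm)
        = fun (y : Fin p → ℝ) j => y (σ j) := by
      funext y j
      rw [MeasurableEquiv.coe_piCongrLeft]
      have := Equiv.piCongrLeft_apply_apply (fun _ : Fin p => ℝ) σ.symm y (σ j)
      simpa using this
    rwa [hco] at MP
  exact measurePreserving_pi _ _ (fun _ => hrow)



lemma gram_signFlip (j0 : Fin p) (A : Fin n → Fin p → ℝ) :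
    Matrix.of (signFlip j0 A) * (Matrix.of (signFlip j0 A))ᵀ
      = Matrix.of A * (Matrix.of A)ᵀ := by
  ext k l
  simp only [Matrix.mul_apply, Matrix.transpose_apply, Matrix.of_apply, signFlip]
  refine Finset.sum_congr rfl fun m _ => ?_
  by_cases hm : m = j0 <;> simp [hm]

lemma projMat_signFlip (j0 : Fin p) (A : Fin n → Fin p → ℝ) (i j : Fin p) :
    projMat (signFlip j0 A) i j
      = (if i = j0 then (-1:ℝ) else 1) * (if j = j0 then (-1:ℝ) else 1) * projMat A i j := by
  have hent : ∀ (k : Fin n) (l : Fin p),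
      signFlip j0 A k l = (if l = j0 then (-1:ℝ) else 1) * A k l := by
    intro k l
    by_cases hl : l = j0 <;> simp [signFlip, hl]
  rw [projMat_apply, projMat_apply, gram_signFlip]
  rw [Finset.mul_sum]
  refine Finset.sum_congr rfl fun l _ => ?_
  rw [hent]
  rw [Finset.sum_congr rfl fun k _ => by rw [hent k i]]
  have : ∑ k, (if i = j0 then (-1:ℝ) else 1) * A k i * (Matrix.of A * (Matrix.of A)ᵀ)⁻¹ k l
      = (if i = j0 then (-1:ℝ) else 1) * ∑ k, A k i * (Matrix.of A * (Matrix.of A)ᵀ)⁻¹ k l := by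
    rw [Finset.mul_sum]
    exact Finset.sum_congr rfl fun k _ => by ring
  rw [this]
  ring

lemma gram_colPerm (σ : Equiv.Perm (Fin p)) (A : Fin n → Fin p → ℝ) :
    Matrix.of (colPerm σ A) * (Matrix.of (colPerm σ A))ᵀ
      = Matrix.of A * (Matrix.of A)ᵀ := by
  ext k l
  simp only [Matrix.mul_apply, Matrix.transpose_apply, Matrix.of_apply, colPerm]
  exact Equiv.sum_comp σ (fun m => A k m * A l m)

lemma projMat_colPerm (σ : Equiv.Perm (Fin p)) (A : Fin n → Fin p → ℝ) (i j : Fin p) :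
    projMat (colPerm σ A) i j = projMat A (σ i) (σ j) := by
  rw [projMat_apply, projMat_apply, gram_colPerm]
  rfl


lemma integrable_projMat_entry (i j : Fin p) :
    Integrable (fun A : Fin n → Fin p → ℝ => projMat A i j) (gaussianMatrix n p) := by
  refine (integrable_const (1:ℝ)).mono'
    (measurable_projMat_entry i j).aestronglyMeasurable (ae_of_all _ fun A => ?_)
  rw [Real.norm_eq_abs]
  exact projMat_abs_le A i j

lemma integral_comp_mp {T : (Fin n → Fin p → ℝ) → (Fin n → Fin p → ℝ)}
    (hT : MeasurePreserving T (gaussianMatrix n p) (gaussianMatrix n p))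
    {f : (Fin n → Fin p → ℝ) → ℝ} (hf : AEStronglyMeasurable f (gaussianMatrix n p)) :
    ∫ A, f (T A) ∂(gaussianMatrix n p) = ∫ A, f A ∂(gaussianMatrix n p) := by
  have h1 := MeasureTheory.integral_map (φ := T) (μ := gaussianMatrix n p)
    hT.measurable.aemeasurable (f := f) (by rw [hT.map_eq]; exact hf)
  rw [hT.map_eq] at h1
  exact h1.symm

lemma integral_projMat_offdiag {i j : Fin p} (hij : i ≠ j) :
    ∫ A, projMat A i j ∂(gaussianMatrix n p) = 0 := by
  have h1 := integral_comp_mp (measurePreserving_signFlip (n := n) j)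
    (measurable_projMat_entry i j).aestronglyMeasurable
  have h2 : ∀ A : Fin n → Fin p → ℝ, projMat (signFlip j A) i j = - projMat A i j := by
    intro A
    rw [projMat_signFlip]
    simp [hij]
  simp only [h2] at h1
  rw [integral_neg] at h1
  linarith

lemma integral_projMat_diag_eq (i j : Fin p) :
    ∫ A, projMat A i i ∂(gaussianMatrix n p) = ∫ A, projMat A j j ∂(gaussianMatrix n p) := by
  have h1 := integral_comp_mp (measurePreserving_colPerm (n := n) (Equiv.swap i j))
    (measurable_projMat_entry i i).aestronglyMeasurable
  have h2 : ∀ A : Fin n → Fin p → ℝ,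
      projMat (colPerm (Equiv.swap i j) A) i i = projMat A j j := by
    intro A
    rw [projMat_colPerm]
    simp [Equiv.swap_apply_left]
  simp only [h2] at h1
  exact h1.symm

lemma sum_integral_projMat_diag (h : n ≤ p) :
    ∑ k : Fin p, ∫ A, projMat A k k ∂(gaussianMatrix n p) = (n : ℝ) := by
  rw [← integral_finset_sum _ (fun k _ => integrable_projMat_entry k k)]
  have heq : ∫ A, (∑ k, projMat A k k) ∂(gaussianMatrix n p)
      = ∫ _A, (n : ℝ) ∂(gaussianMatrix n p) := by
    refine integral_congr_ae ?_
    filter_upwards [ae_isUnit_det h] with A hA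
    exact trace_projMat A hA
  rw [heq, integral_const]
  simp

end
end Auxiliary

/-- for an `n × p` matrix `A` with i.i.d. standard Gaussian entries and
`n ≤ p`, `A Aᵀ` is almost surely invertible and the entrywise expectation
`E[Aᵀ (A Aᵀ)⁻¹ A]` equals `(n/p) · I_p`. -/
theorem gaussian_expectation_projection
    {n p : ℕ} (h : n ≤ p) :
    (∀ᵐ A ∂(gaussianMatrix n p), IsUnit (Matrix.of A * (Matrix.of A)ᵀ).det)
    ∧ (Matrix.of fun i j =>
          ∫ A, ((Matrix.of A)ᵀ * (Matrix.of A * (Matrix.of A)ᵀ)⁻¹ * Matrix.of A) i j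
            ∂(gaussianMatrix n p))
        = ((n : ℝ) / (p : ℝ)) • (1 : Matrix (Fin p) (Fin p) ℝ) := by
  refine ⟨ae_isUnit_det h, ?_⟩
  ext i j
  show (∫ A, projMat A i j ∂(gaussianMatrix n p))
      = (((n : ℝ) / (p : ℝ)) • (1 : Matrix (Fin p) (Fin p) ℝ)) i j
  rw [Matrix.smul_apply, Matrix.one_apply]
  by_cases hij : i = j
  · subst hij
    simp only [if_pos rfl, smul_eq_mul, mul_one]
    have hp : (p : ℝ) ≠ 0 := by
      have hpos : 0 < p := i.pos
      positivity
    have hsum := sum_integral_projMat_diag (n := n) (p := p) h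
    have hall : ∀ k : Fin p, ∫ A, projMat A k k ∂(gaussianMatrix n p)
        = ∫ A, projMat A i i ∂(gaussianMatrix n p) :=
      fun k => integral_projMat_diag_eq k i
    rw [Finset.sum_congr rfl (fun k _ => hall k), Finset.sum_const, Finset.card_univ,
      Fintype.card_fin, nsmul_eq_mul] at hsum
    field_simp
    simp only [if_true, mul_one]
    linarith
  · rw [if_neg hij]
    simp only [smul_eq_mul, mul_zero]
    exact integral_projMat_offdiag hij
end

section
/- (Corollary 2, first part.) Fix real numbers σ_x > 0, σ_v > 0, p > 0 and n, and define for real s ∈ [0, p] the function ε(s) = (s/(n − s − 1)) (σ_x² (p − s) + σ_v²) + σ_x² (p − s). If n > p + σ_v²/σ_x² + 1, then ε is strictly monotonically decreasing on the interval [0, p]. -/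
/-- Corollary 2, first part: the expected MSE
`ε(s) = (s/(n − s − 1))(σ_x²(p − s) + σ_v²) + σ_x²(p − s)`, with the assumed model order
`s = p_S` treated as a continuous variable, is strictly monotonically decreasing on
`[0, p]` whenever `n > p + σ_v²/σ_x² + 1`. -/
theorem expected_mse_strictAntiOn
    (σx σv p n : ℝ) (hσx : 0 < σx) (hσv : 0 < σv) (hp : 0 < p)
    (hn : n > p + σv ^ 2 / σx ^ 2 + 1) :
    StrictAntiOn
      (fun s : ℝ => s / (n - s - 1) * (σx ^ 2 * (p - s) + σv ^ 2) + σx ^ 2 * (p - s))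
      (Set.Icc 0 p) := by
  intro x hx y hy hxy
  have hx2 : (0:ℝ) < σx ^ 2 := by positivity
  have hratio : 0 < σv ^ 2 / σx ^ 2 := by positivity
  have hC : σv ^ 2 < σx ^ 2 * (n - 1 - p) := by
    have h1 : σv ^ 2 / σx ^ 2 < n - 1 - p := by linarith
    calc σv ^ 2 = σx ^ 2 * (σv ^ 2 / σx ^ 2) := by field_simp
    _ < σx ^ 2 * (n - 1 - p) := by
        exact mul_lt_mul_of_pos_left h1 hx2
  have hdx : 0 < n - x - 1 := by
    have := hx.2
    linarith
  have hdy : 0 < n - y - 1 := by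
    have := hy.2
    linarith
  have hn1 : 0 < n - 1 := by linarith
  have key :
      (x / (n - x - 1) * (σx ^ 2 * (p - x) + σv ^ 2) + σx ^ 2 * (p - x)) -
        (y / (n - y - 1) * (σx ^ 2 * (p - y) + σv ^ 2) + σx ^ 2 * (p - y)) =
        ((n - 1) * (σx ^ 2 * (n - 1 - p) - σv ^ 2) * (y - x)) /
          ((n - x - 1) * (n - y - 1)) := by
    field_simp
    ring
  have hpos : 0 < ((n - 1) * (σx ^ 2 * (n - 1 - p) - σv ^ 2) * (y - x)) /
      ((n - x - 1) * (n - y - 1)) := by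
    apply div_pos
    · apply mul_pos (mul_pos hn1 (by linarith)) (by linarith)
    · exact mul_pos hdx hdy
  simp only []
  linarith [key, hpos]
end

section
/- (Corollary 2, second part.) Fix real numbers σ_x > 0, σ_v > 0, p > 0 and n, and define for real s ∈ [0, p] the function ε(s) = (s/(n − s − 1)) (σ_x² (p − s) + σ_v²) + σ_x² (p − s). If p + 1 < n < p + σ_v²/σ_x² + 1, then ε is strictly monotonically increasing on the interval [0, p]. -/
/-- Corollary 2, second part: the expected MSE
`ε(s) = (s/(n − s − 1))(σ_x²(p − s) + σ_v²) + σ_x²(p − s)`, with the assumed model order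
`s = p_S` treated as a continuous variable, is strictly monotonically increasing on
`[0, p]` whenever `p + 1 < n < p + σ_v²/σ_x² + 1`. -/
theorem expected_mse_strictMonoOn
    (σx σv p n : ℝ) (hσx : 0 < σx) (hσv : 0 < σv) (hp : 0 < p)
    (hn₁ : p + 1 < n) (hn₂ : n < p + σv ^ 2 / σx ^ 2 + 1) :
    StrictMonoOn
      (fun s : ℝ => s / (n - s - 1) * (σx ^ 2 * (p - s) + σv ^ 2) + σx ^ 2 * (p - s))
      (Set.Icc 0 p) := by
  have hD : 0 < σv ^ 2 - σx ^ 2 * (n - 1 - p) := by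
    have h := sub_lt_sub_right (sub_lt_sub_right hn₂ p) 1
    have : n - 1 - p < σv ^ 2 / σx ^ 2 := by linarith
    have := (lt_div_iff₀ (by positivity : (0:ℝ) < σx ^ 2)).mp this
    nlinarith
  have hn1 : 0 < n - 1 := by linarith
  intro a ha b hb hab
  have hca : 0 < n - 1 - a := by have := ha.2; linarith
  have hcb : 0 < n - 1 - b := by have := hb.2; linarith
  have key : ∀ x : ℝ, n - 1 - x ≠ 0 →
      x / (n - x - 1) * (σx ^ 2 * (p - x) + σv ^ 2) + σx ^ 2 * (p - x)
      = (n - 1) * σx ^ 2 - σv ^ 2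
        + (n - 1) * (σv ^ 2 - σx ^ 2 * (n - 1 - p)) / (n - 1 - x) := by
    intro x hx
    have hx' : n - x - 1 ≠ 0 := by intro h; apply hx; linarith
    field_simp
    ring
  simp only [key a hca.ne', key b hcb.ne']
  have hd : (n - 1) * (σv ^ 2 - σx ^ 2 * (n - 1 - p)) / (n - 1 - a)
      < (n - 1) * (σv ^ 2 - σx ^ 2 * (n - 1 - p)) / (n - 1 - b) :=
    div_lt_div_of_pos_left (by positivity) hcb (by linarith)
  linarith
end
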